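/- arXiv:1303.6712 — 4 statements merged into one kernel-verified Lean document; each statement's English description precedes it below -/
import Mathlib

section
/- Let G be a group fitting in a short exact sequence 0 → ℤ^d → G → ℤ → 0, with H ⊴ G the image of ℤ^d, z ∈ G mapping to a generator of ℤ, and A : H → H the automorphism given by conjugation by z (z·x·z⁻¹ = A(x) for x ∈ H). If A is hyperbolic (equivalently, A − I is injective on H ≅ ℤ^d, i.e., A has no eigenvalue equal to 1 in the sense that A(x) = x implies x = 0), then H equals the set of v ∈ G such that v^k ∈ [G,G] for some nonzero integer k. In particular H is a characteristic subgroup of G: every automorphism of G maps H onto H. -/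
/-- An injective linear endomorphism of `ℤ^d` has "finite index" image in the sense
that every vector has a nonzero multiple in the range. -/
lemma exists_smul_mem_range_of_injective {d : ℕ}
    (f : (Fin d → ℤ) →ₗ[ℤ] (Fin d → ℤ)) (hf : Function.Injective f)
    (v : Fin d → ℤ) : ∃ k : ℤ, k ≠ 0 ∧ ∃ w, f w = k • v := by
  set M := LinearMap.toMatrix' f with hM
  have hfM : ∀ x, f x = M.mulVec x := by
    intro x
    have h : f = Matrix.toLin' M := by rw [hM, Matrix.toLin'_toMatrix']
    rw [h, Matrix.toLin'_apply]
  have hdet : M.det ≠ 0 := by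
    intro h
    obtain ⟨u, hu, hMu⟩ := Matrix.exists_mulVec_eq_zero_iff.2 h
    exact hu (hf (by rw [hfM, hMu, map_zero]))
  refine ⟨M.det, hdet, M.adjugate.mulVec v, ?_⟩
  rw [hfM, Matrix.mulVec_mulVec, Matrix.mul_adjugate, Matrix.smul_mulVec,
    Matrix.one_mulVec]

/-- let `0 → ℤ^d → G → ℤ → 0` be exact, `H` the image of `ℤ^d`, `z ∈ G` mapping
to a generator of `ℤ`, so that conjugation by `z` gives the automorphism `A` of `H`. If `A` is
hyperbolic in the sense that it has no nonzero fixed vector (`z x z⁻¹ = x → x = 1` on `H`),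
then `H = { v ∈ G : v^k ∈ [G,G] for some k ≠ 0 }`; in particular `H` is characteristic. -/
theorem image_of_Zd_is_radical_of_commutator
    {d : ℕ} {G : Type*} [Group G]
    (i : Multiplicative (Fin d → ℤ) →* G) (π : G →* Multiplicative ℤ)
    (hi : Function.Injective i) (hπ : Function.Surjective π)
    (hexact : i.range = π.ker)
    (z : G) (hz : π z = Multiplicative.ofAdd 1)
    (hhyp : ∀ x ∈ i.range, z * x * z⁻¹ = x → x = 1) :
    (∀ v : G, v ∈ i.range ↔ ∃ k : ℤ, k ≠ 0 ∧ v ^ k ∈ commutator G) ∧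
    (∀ φ : G ≃* G, i.range.map φ.toMonoidHom = i.range) := by
  classical
  -- conjugation by z preserves i.range
  have hconj : ∀ x : Fin d → ℤ, ∃ y : Fin d → ℤ,
      i (Multiplicative.ofAdd y) = z * i (Multiplicative.ofAdd x) * z⁻¹ := by
    intro x
    have hx : i (Multiplicative.ofAdd x) ∈ π.ker := by
      rw [← hexact]; exact ⟨_, rfl⟩
    rw [MonoidHom.mem_ker] at hx
    have hmem : z * i (Multiplicative.ofAdd x) * z⁻¹ ∈ i.range := by
      rw [hexact, MonoidHom.mem_ker]
      simp [hx]
    obtain ⟨y, hy⟩ := hmem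
    exact ⟨Multiplicative.toAdd y, by simpa using hy⟩
  set b : (Fin d → ℤ) → (Fin d → ℤ) := fun x => Classical.choose (hconj x) with hb
  have hbspec : ∀ x, i (Multiplicative.ofAdd (b x)) =
      z * i (Multiplicative.ofAdd x) * z⁻¹ := fun x => Classical.choose_spec (hconj x)
  -- b is additive
  have hbadd : ∀ x y, b (x + y) = b x + b y := by
    intro x y
    have key : i (Multiplicative.ofAdd (b (x + y))) =
        i (Multiplicative.ofAdd (b x + b y)) := by
      rw [hbspec, ofAdd_add, map_mul, ofAdd_add, map_mul, hbspec, hbspec]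
      group
    exact Multiplicative.ofAdd.injective (hi key)
  -- f := b - id is an injective linear map
  set f : (Fin d → ℤ) →ₗ[ℤ] (Fin d → ℤ) :=
    (AddMonoidHom.mk' (fun x => b x - x)
      (by intro x y
          show b (x + y) - (x + y) = (b x - x) + (b y - y)
          rw [hbadd]; abel)).toIntLinearMap with hf
  have hfapp : ∀ x, f x = b x - x := fun _ => rfl
  have hker : ∀ u, f u = 0 → u = 0 := by
    intro u hu
    have hbu : b u = u := by
      have h := hfapp u
      rw [hu] at h
      exact (sub_eq_zero.mp h.symm)
    have h1 : i (Multiplicative.ofAdd u) = 1 := by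
      apply hhyp _ ⟨_, rfl⟩
      rw [← hbspec, hbu]
    have := hi (h1.trans (map_one i).symm)
    simpa using this
  have hfinj : Function.Injective f := by
    intro x y hxy
    have := hker (x - y) (by rw [map_sub, hxy, sub_self])
    exact sub_eq_zero.mp this
  -- main equivalence
  have main : ∀ v : G, v ∈ i.range ↔ ∃ k : ℤ, k ≠ 0 ∧ v ^ k ∈ commutator G := by
    intro v
    constructor
    · rintro ⟨x, rfl⟩
      obtain ⟨k, hk, w, hw⟩ := exists_smul_mem_range_of_injective f hfinj
        (Multiplicative.toAdd x)
      refine ⟨k, hk, ?_⟩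
      have hfw : b w - w = k • Multiplicative.toAdd x := hw
      have hxk : i x ^ k = i (Multiplicative.ofAdd (b w - w)) := by
        have h2 : Multiplicative.ofAdd (k • Multiplicative.toAdd x) = x ^ k := by
          rw [ofAdd_zsmul]; simp
        rw [hfw, h2, map_zpow]
      rw [hxk]
      open scoped commutatorElement in
      have : i (Multiplicative.ofAdd (b w - w)) =
          ⁅z, i (Multiplicative.ofAdd w)⁆ := by
        rw [commutatorElement_def, sub_eq_add_neg, ofAdd_add, map_mul, hbspec, ofAdd_neg,
          map_inv]
      rw [this]
      exact Subgroup.commutator_mem_commutator (Subgroup.mem_top _) (Subgroup.mem_top _)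
    · rintro ⟨k, hk, hvk⟩
      rw [hexact, MonoidHom.mem_ker]
      -- π kills the commutator subgroup
      have hπcomm : π (v ^ k) = 1 :=
        Abelianization.commutator_subset_ker π hvk
      have hπv : π v ^ k = 1 := by rw [← map_zpow, hπcomm]
      have : k • Multiplicative.toAdd (π v) = 0 := by
        have := congrArg Multiplicative.toAdd hπv
        simpa [toAdd_zpow] using this
      have h0 : Multiplicative.toAdd (π v) = 0 := by
        rcases smul_eq_zero.mp this with h | h
        · exact absurd h hk
        · exact h
      have : π v = Multiplicative.ofAdd 0 := by
        rw [← h0]; simp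
      simpa using this
  refine ⟨main, ?_⟩
  -- characteristic
  intro φ
  have hchar : ∀ (ψ : G ≃* G) (v : G), v ∈ i.range → ψ v ∈ i.range := by
    intro ψ v hv
    obtain ⟨k, hk, hvk⟩ := (main v).mp hv
    refine (main (ψ v)).mpr ⟨k, hk, ?_⟩
    rw [← map_zpow]
    have hfix : Subgroup.comap ψ.toMonoidHom (commutator G) = commutator G :=
      Subgroup.characteristic_iff_comap_eq.mp inferInstance ψ
    rw [← hfix] at hvk
    exact Subgroup.mem_comap.mp hvk
  apply le_antisymm
  · rintro w ⟨v, hv, rfl⟩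
    exact hchar φ v hv
  · intro v hv
    refine ⟨φ.symm v, hchar φ.symm v hv, ?_⟩
    simp
end

section
/- Let G be a finitely generated group with a fixed finite generating set, and suppose the outer automorphism group Out(G) is finite. Let φ ∈ Aut(G), N ∈ ℕ, and let A₀ ⊆ G be finite. Define A_{k+1} = U_N(φ(A_k)), where U_N(A) denotes the N-neighborhood of A in the word metric. Then the diameters diam(A_k) (in the word metric) grow at most linearly in k; in particular, at most polynomially. -/
variable {G : Type*} [Group G]

/-- Word length with respect to a finite generating set `S` (letters from `S ∪ S⁻¹`). -/
noncomputable def wordLength (S : Finset G) (g : G) : ℕ :=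
  sInf {n | ∃ l : List G, (∀ x ∈ l, x ∈ S ∨ x⁻¹ ∈ S) ∧ l.length = n ∧ l.prod = g}

/-- The left-invariant word metric `d(x,y) = |x⁻¹ y|`. -/
noncomputable def wordDist (S : Finset G) (x y : G) : ℕ := wordLength S (x⁻¹ * y)

/-- The `N`-neighborhood of a set in the word metric. -/
noncomputable def wordNbhd (S : Finset G) (N : ℕ) (A : Set G) : Set G :=
  {g | ∃ a ∈ A, wordDist S a g ≤ N}

namespace Aux
variable (S : Finset G)

lemma prod_inv_rev (l : List G) : ((l.map (·⁻¹)).reverse).prod = l.prod⁻¹ := by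
  induction l with
  | nil => simp
  | cons a t ih => simp [mul_inv_rev, ih]

lemma wordLength_le {l : List G} (hl : ∀ x ∈ l, x ∈ S ∨ x⁻¹ ∈ S) {g : G} (hp : l.prod = g) :
    wordLength S g ≤ l.length := Nat.sInf_le ⟨l, hl, rfl, hp⟩

lemma exists_min_word (hS : Subgroup.closure (S : Set G) = ⊤) (g : G) :
    ∃ l : List G, (∀ x ∈ l, x ∈ S ∨ x⁻¹ ∈ S) ∧ l.length = wordLength S g ∧ l.prod = g := by
  have hg : g ∈ Subgroup.closure (S : Set G) := by rw [hS]; trivial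
  have h : ∃ l : List G, (∀ x ∈ l, x ∈ S ∨ x⁻¹ ∈ S) ∧ l.prod = g := by
    induction hg using Subgroup.closure_induction with
    | mem x hx => exact ⟨[x], by simpa using Or.inl hx, by simp⟩
    | one => exact ⟨[], by simp, by simp⟩
    | mul x y hx hy ihx ihy =>
      obtain ⟨l₁, h₁, p₁⟩ := ihx; obtain ⟨l₂, h₂, p₂⟩ := ihy
      refine ⟨l₁ ++ l₂, ?_, by simp [p₁, p₂]⟩
      intro z hz
      rcases List.mem_append.mp hz with h | h
      exacts [h₁ z h, h₂ z h]
    | inv x hx ih =>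
      obtain ⟨l, hl, pl⟩ := ih
      refine ⟨(l.map (·⁻¹)).reverse, ?_, ?_⟩
      · intro z hz
        simp only [List.mem_reverse, List.mem_map] at hz
        obtain ⟨y, hy, rfl⟩ := hz
        rcases hl y hy with h | h
        · exact Or.inr (by simpa using h)
        · exact Or.inl h
      · rw [← pl]; exact prod_inv_rev l
  obtain ⟨l, hl, hp⟩ := h
  have hne : {n | ∃ l : List G, (∀ x ∈ l, x ∈ S ∨ x⁻¹ ∈ S) ∧ l.length = n ∧ l.prod = g}.Nonempty :=
    ⟨l.length, l, hl, rfl, hp⟩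
  obtain ⟨l', hl', hlen', hp'⟩ := Nat.sInf_mem hne
  exact ⟨l', hl', hlen', hp'⟩

lemma wordLength_one : wordLength S (1 : G) = 0 :=
  Nat.le_zero.mp (wordLength_le S (l := []) (by simp) (by simp))

variable (hS : Subgroup.closure (S : Set G) = ⊤)
include hS

lemma wordLength_mul_le (g h : G) :
    wordLength S (g * h) ≤ wordLength S g + wordLength S h := by
  obtain ⟨l₁, h₁, len₁, p₁⟩ := exists_min_word S hS g
  obtain ⟨l₂, h₂, len₂, p₂⟩ := exists_min_word S hS h
  have := wordLength_le S (l := l₁ ++ l₂)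
    (by intro z hz; rcases List.mem_append.mp hz with hh | hh; exacts [h₁ z hh, h₂ z hh])
    (g := g * h) (by simp [p₁, p₂])
  simpa [len₁, len₂] using this

lemma wordLength_inv (g : G) : wordLength S g⁻¹ = wordLength S g := by
  have key : ∀ x : G, wordLength S x⁻¹ ≤ wordLength S x := by
    intro x
    obtain ⟨l, hl, len, p⟩ := exists_min_word S hS x
    have hprod : ((l.map (·⁻¹)).reverse).prod = x⁻¹ := by
      rw [← p]; exact prod_inv_rev l
    have := wordLength_le S (l := (l.map (·⁻¹)).reverse) ?_ hprod
    · simpa [len] using this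
    · intro z hz
      simp only [List.mem_reverse, List.mem_map] at hz
      obtain ⟨y, hy, rfl⟩ := hz
      rcases hl y hy with h | h
      · exact Or.inr (by simpa using h)
      · exact Or.inl h
  exact le_antisymm (key g) (by simpa using key g⁻¹)

lemma wordLength_prod_le (l : List G) :
    wordLength S l.prod ≤ (l.map (wordLength S)).sum := by
  induction l with
  | nil => simpa using wordLength_one S
  | cons a t ih =>
    simp only [List.prod_cons, List.map_cons, List.sum_cons]
    have h2 := wordLength_mul_le S hS a t.prod
    omega

lemma exists_lipschitz (ψ : G ≃* G) :
    ∃ C : ℕ, ∀ a b : G, wordDist S (ψ a) (ψ b) ≤ C * wordDist S a b := by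
  refine ⟨S.sup fun s => wordLength S (ψ s), ?_⟩
  have key : ∀ g : G, wordLength S (ψ g) ≤ (S.sup fun s => wordLength S (ψ s)) * wordLength S g := by
    intro g
    obtain ⟨l, hl, len, p⟩ := exists_min_word S hS g
    have h1 : wordLength S (ψ g) ≤ ((l.map ψ).map (wordLength S)).sum := by
      have : (l.map ψ).prod = ψ g := by rw [← p]; exact (map_list_prod ψ.toMonoidHom l).symm
      simpa [this] using wordLength_prod_le S hS (l.map ψ)
    have h2 : ((l.map ψ).map (wordLength S)).sum ≤
        l.length * (S.sup fun s => wordLength S (ψ s)) := by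
      have := List.sum_le_card_nsmul ((l.map ψ).map (wordLength S))
        (S.sup fun s => wordLength S (ψ s)) ?_
      · simpa [smul_eq_mul] using this
      · intro x hx
        simp only [List.mem_map] at hx
        obtain ⟨y, ⟨z, hz, rfl⟩, rfl⟩ := hx
        rcases hl z hz with h | h
        · exact Finset.le_sup (f := fun s => wordLength S (ψ s)) h
        · calc wordLength S (ψ z) = wordLength S (ψ z⁻¹) := by
                rw [map_inv, wordLength_inv S hS]
          _ ≤ _ := Finset.le_sup (f := fun s => wordLength S (ψ s)) h
    calc wordLength S (ψ g) ≤ l.length * (S.sup fun s => wordLength S (ψ s)) := le_trans h1 h2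
    _ = _ := by rw [len, mul_comm]
  intro a b
  have h : (ψ a)⁻¹ * ψ b = ψ (a⁻¹ * b) := by simp
  unfold wordDist
  rw [h]
  exact key (a⁻¹ * b)

lemma dist_triangle (x y z : G) :
    wordDist S x z ≤ wordDist S x y + wordDist S y z := by
  have h : x⁻¹ * z = (x⁻¹ * y) * (y⁻¹ * z) := by group
  unfold wordDist
  rw [h]
  exact wordLength_mul_le S hS (x⁻¹ * y) (y⁻¹ * z)

lemma dist_comm (x y : G) : wordDist S x y = wordDist S y x := by
  have : y⁻¹ * x = (x⁻¹ * y)⁻¹ := by group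
  rw [wordDist, wordDist, this, wordLength_inv S hS]

omit hS in
lemma dist_self (x : G) : wordDist S x x = 0 := by
  simp [wordDist, wordLength_one]

lemma dist_conj (g a b : G) :
    wordDist S (g * a * g⁻¹) (g * b * g⁻¹) ≤ wordDist S a b + 2 * wordLength S g := by
  have h : (g * a * g⁻¹)⁻¹ * (g * b * g⁻¹) = g * ((a⁻¹ * b) * g⁻¹) := by group
  calc wordDist S (g * a * g⁻¹) (g * b * g⁻¹)
      = wordLength S (g * ((a⁻¹ * b) * g⁻¹)) := by rw [wordDist, h]
    _ ≤ wordLength S g + wordLength S ((a⁻¹ * b) * g⁻¹) := wordLength_mul_le S hS _ _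
    _ ≤ wordLength S g + (wordLength S (a⁻¹ * b) + wordLength S g⁻¹) := by
        have := wordLength_mul_le S hS (a⁻¹ * b) g⁻¹; omega
    _ ≤ _ := by rw [wordLength_inv S hS]; unfold wordDist; omega

end Aux

/-- if `Out(G)` is finite, then for any automorphism `φ`, any `N`, and any finite
`A₀ ⊆ G`, the sequence `A_{k+1} = U_N(φ(A_k))` has word-metric diameter growing at most
linearly (hence polynomially) in `k`. -/
theorem diameter_linear_growth_of_finite_out
    (S : Finset G) (hS : Subgroup.closure (S : Set G) = ⊤)
    (hOut : Finite (MulAut G ⧸ (MulAut.conj : G →* MulAut G).range))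
    (φ : G ≃* G) (N : ℕ) (A : ℕ → Set G) (hA0 : (A 0).Finite)
    (hAseq : ∀ k, A (k + 1) = wordNbhd S N (φ '' A k)) :
    ∃ C : ℕ, ∀ k, ∀ x ∈ A k, ∀ y ∈ A k, wordDist S x y ≤ C * (k + 1) := by
  classical
  obtain ⟨Cφ, hCφ⟩ := Aux.exists_lipschitz S hS φ
  obtain ⟨Φ, hΦ⟩ : ∃ Φ : MulAut G, ∀ z : G, Φ z = φ z := ⟨φ, fun _ => rfl⟩
  -- some positive power of φ is inner
  obtain ⟨p, hp, g, hg⟩ : ∃ p > 0, ∃ g : G, MulAut.conj g = Φ ^ p := by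
    obtain ⟨m, n, hmn, h⟩ := Finite.exists_ne_map_eq_of_infinite
      (fun n : ℕ => (QuotientGroup.mk (Φ ^ n) :
        MulAut G ⧸ (MulAut.conj : G →* MulAut G).range))
    have key : ∀ m n : ℕ, m < n →
        (QuotientGroup.mk (Φ ^ m) : MulAut G ⧸ (MulAut.conj : G →* MulAut G).range)
          = QuotientGroup.mk (Φ ^ n) → ∃ p > 0, ∃ g : G, MulAut.conj g = Φ ^ p := by
      intro m n hlt heq
      have hmem : (Φ ^ m)⁻¹ * Φ ^ n ∈ (MulAut.conj : G →* MulAut G).range :=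
        QuotientGroup.leftRel_apply.mp (Quotient.eq''.mp heq)
      have hpow : (Φ ^ m)⁻¹ * Φ ^ n = Φ ^ (n - m) := by
        have : Φ ^ n = Φ ^ m * Φ ^ (n - m) := by
          rw [← pow_add, Nat.add_sub_cancel' hlt.le]
        rw [this, inv_mul_cancel_left]
      rw [hpow] at hmem
      obtain ⟨g, hg⟩ := hmem
      exact ⟨n - m, by omega, g, hg⟩
    rcases Nat.lt_or_ge m n with hlt | hge
    · exact key m n hlt h
    · exact key n m (by omega : n < m) h.symm
  -- distances are φ-Lipschitz with constant Cφ (as maps on pairs)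
  have hφdist : ∀ a b : G, wordDist S (φ a) (φ b) ≤ Cφ * wordDist S a b := hCφ
  -- reach: every point of A (k+j) is within a constant of (Φ^j) of a point of A k
  have reach : ∀ j : ℕ, ∃ M : ℕ, ∀ k, ∀ x ∈ A (k + j),
      ∃ a ∈ A k, wordDist S ((Φ ^ j) a) x ≤ M := by
    intro j
    induction j with
    | zero =>
      refine ⟨0, fun k x hx => ⟨x, by simpa using hx, ?_⟩⟩
      simp [Aux.dist_self]
    | succ j ih =>
      obtain ⟨M, hM⟩ := ih
      refine ⟨Cφ * M + N, fun k x hx => ?_⟩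
      have hx' : x ∈ wordNbhd S N (φ '' A (k + j)) := by
        rw [← hAseq]; exact hx
      obtain ⟨z', ⟨z, hz, rfl⟩, hd⟩ := hx'
      obtain ⟨a, ha, hda⟩ := hM k z hz
      refine ⟨a, ha, ?_⟩
      have e1 : (Φ ^ (j + 1)) a = φ ((Φ ^ j) a) := by
        rw [pow_succ', ← hΦ]; rfl
      calc wordDist S ((Φ ^ (j + 1)) a) x
          ≤ wordDist S ((Φ ^ (j + 1)) a) (φ z) + wordDist S (φ z) x :=
            Aux.dist_triangle S hS _ _ _
        _ ≤ Cφ * M + N := by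
            have h1 : wordDist S ((Φ ^ (j + 1)) a) (φ z) ≤ Cφ * M := by
              rw [e1]
              calc wordDist S (φ ((Φ ^ j) a)) (φ z) ≤ Cφ * wordDist S ((Φ ^ j) a) z :=
                    hφdist _ _
                _ ≤ Cφ * M := Nat.mul_le_mul_left _ hda
            omega
  obtain ⟨M, hM⟩ := reach p
  set C₀ : ℕ := M + M + 2 * wordLength S g with hC₀
  -- p-step bound
  have stepP : ∀ k B, (∀ x ∈ A k, ∀ y ∈ A k, wordDist S x y ≤ B) →
      ∀ x ∈ A (k + p), ∀ y ∈ A (k + p), wordDist S x y ≤ B + C₀ := by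
    intro k B hB x hx y hy
    obtain ⟨a, ha, hda⟩ := hM k x hx
    obtain ⟨b, hb, hdb⟩ := hM k y hy
    have hconj : ∀ c : G, (Φ ^ p) c = g * c * g⁻¹ := by
      intro c; rw [← hg]; rfl
    have hmid : wordDist S ((Φ ^ p) a) ((Φ ^ p) b) ≤ wordDist S a b + 2 * wordLength S g := by
      rw [hconj a, hconj b]; exact Aux.dist_conj S hS g a b
    have hxa : wordDist S x ((Φ ^ p) a) ≤ M := by
      rw [Aux.dist_comm S hS]; exact hda
    calc wordDist S x y ≤ wordDist S x ((Φ ^ p) a) + wordDist S ((Φ ^ p) a) y :=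
          Aux.dist_triangle S hS _ _ _
      _ ≤ wordDist S x ((Φ ^ p) a) +
          (wordDist S ((Φ ^ p) a) ((Φ ^ p) b) + wordDist S ((Φ ^ p) b) y) := by
          have := Aux.dist_triangle S hS ((Φ ^ p) a) ((Φ ^ p) b) y; omega
      _ ≤ M + ((wordDist S a b + 2 * wordLength S g) + M) := by omega
      _ ≤ B + C₀ := by have := hB a ha b hb; omega
  -- one-step bound
  have step1 : ∀ k B, (∀ x ∈ A k, ∀ y ∈ A k, wordDist S x y ≤ B) →
      ∀ x ∈ A (k + 1), ∀ y ∈ A (k + 1), wordDist S x y ≤ Cφ * B + 2 * N := by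
    intro k B hB x hx y hy
    rw [hAseq] at hx hy
    obtain ⟨xa, ⟨a, ha, rfl⟩, hdx⟩ := hx
    obtain ⟨yb, ⟨b, hb, rfl⟩, hdy⟩ := hy
    have hdx' : wordDist S x (φ a) ≤ N := by
      rw [Aux.dist_comm S hS]; exact hdx
    have h1 := hφdist a b
    have h2 := hB a ha b hb
    have h3 : Cφ * wordDist S a b ≤ Cφ * B := Nat.mul_le_mul_left _ h2
    calc wordDist S x y ≤ wordDist S x (φ a) + wordDist S (φ a) y :=
          Aux.dist_triangle S hS _ _ _
      _ ≤ wordDist S x (φ a) + (wordDist S (φ a) (φ b) + wordDist S (φ b) y) := by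
          have := Aux.dist_triangle S hS (φ a) (φ b) y; omega
      _ ≤ Cφ * B + 2 * N := by omega
  -- initial bound on A 0
  set t : Finset G := hA0.toFinset with ht
  set B₀ : ℕ := t.sup fun x => t.sup fun y => wordDist S x y with hB₀
  have h0 : ∀ x ∈ A 0, ∀ y ∈ A 0, wordDist S x y ≤ B₀ := by
    intro x hx y hy
    have hx' : x ∈ t := hA0.mem_toFinset.mpr hx
    have hy' : y ∈ t := hA0.mem_toFinset.mpr hy
    exact le_trans (Finset.le_sup (f := fun y => wordDist S x y) hy')
      (Finset.le_sup (f := fun x => t.sup fun y => wordDist S x y) hx')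
  -- bounds f k for all k (crude, used only for k < p)
  set f : ℕ → ℕ := fun k => Nat.rec B₀ (fun _ b => Cφ * b + 2 * N) k with hf
  have hfbound : ∀ k, ∀ x ∈ A k, ∀ y ∈ A k, wordDist S x y ≤ f k := by
    intro k
    induction k with
    | zero => exact h0
    | succ k ih => exact step1 k (f k) ih
  set Binit : ℕ := (Finset.range p).sup f with hBinit
  have main : ∀ q r, r < p → ∀ x ∈ A (q * p + r), ∀ y ∈ A (q * p + r),
      wordDist S x y ≤ Binit + C₀ * q := by
    intro q
    induction q with
    | zero =>
      intro r hr x hx y hy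
      have hle : f r ≤ Binit := Finset.le_sup (Finset.mem_range.mpr hr)
      have := hfbound r x (by simpa using hx) y (by simpa using hy)
      omega
    | succ q ih =>
      intro r hr x hx y hy
      have hrw : (q + 1) * p + r = (q * p + r) + p := by ring
      rw [hrw] at hx hy
      have := stepP (q * p + r) (Binit + C₀ * q) (ih r hr) x hx y hy
      have : wordDist S x y ≤ Binit + C₀ * q + C₀ := this
      have heq : Binit + C₀ * (q + 1) = Binit + C₀ * q + C₀ := by ring
      omega
  refine ⟨Binit + C₀, fun k x hx y hy => ?_⟩
  have hk : (k / p) * p + k % p = k := by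
    rw [mul_comm]; exact Nat.div_add_mod k p
  have hb := main (k / p) (k % p) (Nat.mod_lt _ hp) x (by rwa [hk]) y (by rwa [hk])
  have hdiv : k / p ≤ k := Nat.div_le_self k p
  have h1 : C₀ * (k / p) ≤ C₀ * k := Nat.mul_le_mul_left _ hdiv
  nlinarith [hb, h1]
end

section
/- Let G be a finitely generated group acting freely, properly discontinuously, cocompactly by isometries on a proper geodesic metric space M̃ (e.g. G = π₁(M) acting on the universal cover of a compact Riemannian manifold M). Suppose that for every automorphism φ of G, every N > 0, and every finite A₀ ⊆ G, the sequence A_{k+1} = U_N(φ(A_k)) has word-metric diameter growing at most polynomially in k. Then for every homeomorphism f : M → M with lift f̃ : M̃ → M̃ and every bounded set K ⊆ M̃, the diameter of f̃ⁿ(K) grows at most polynomially as n → ∞. -/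
variable {G : Type*} [Group G]

/-- Every element of a group generated by `S` is a product of letters from `S ∪ S⁻¹`. -/
lemma exists_word_rep (S : Finset G) (hS : Subgroup.closure (S : Set G) = ⊤) (g : G) :
    ∃ l : List G, (∀ x ∈ l, x ∈ S ∨ x⁻¹ ∈ S) ∧ l.prod = g := by
  have hg : g ∈ Subgroup.closure (S : Set G) := hS ▸ Subgroup.mem_top g
  induction hg using Subgroup.closure_induction with
  | mem x hx => exact ⟨[x], by simpa using Or.inl hx, by simp⟩
  | one => exact ⟨[], by simp, by simp⟩
  | mul x y hx hy ihx ihy =>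
      obtain ⟨lx, hlx, px⟩ := ihx
      obtain ⟨ly, hly, py⟩ := ihy
      refine ⟨lx ++ ly, ?_, by simp [px, py]⟩
      intro a ha
      rcases List.mem_append.1 ha with h | h
      · exact hlx a h
      · exact hly a h
  | inv x hx ih =>
      obtain ⟨l, hl, pl⟩ := ih
      refine ⟨(l.map fun a => a⁻¹).reverse, ?_, ?_⟩
      · intro a ha
        simp only [List.mem_reverse, List.mem_map] at ha
        obtain ⟨b, hb, rfl⟩ := ha
        rcases hl b hb with h | h
        · exact Or.inr (by simpa using h)
        · exact Or.inl h
      · rw [← pl, List.prod_inv_reverse]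

/-- There is a word of minimal length representing `g`. -/
lemma exists_min_word (S : Finset G) (hS : Subgroup.closure (S : Set G) = ⊤) (g : G) :
    ∃ l : List G, (∀ x ∈ l, x ∈ S ∨ x⁻¹ ∈ S) ∧ l.length = wordLength S g ∧ l.prod = g := by
  have hne : {n | ∃ l : List G, (∀ x ∈ l, x ∈ S ∨ x⁻¹ ∈ S) ∧ l.length = n ∧ l.prod = g}.Nonempty := by
    obtain ⟨l, hl, pl⟩ := exists_word_rep S hS g
    exact ⟨l.length, l, hl, rfl, pl⟩
  have := Nat.sInf_mem hne
  exact this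

/-- let `G` act freely, properly discontinuously, cocompactly by isometries on a
proper geodesic metric space `M̃`. If for every automorphism `φ`, every `N ≥ 1` and every finite
`A₀`, the sequence `A_{k+1} = U_N(φ(A_k))` has polynomially growing word-metric diameter, then
for every homeomorphism `f̃` of `M̃` that is a lift of a homeomorphism of `M̃/G` (i.e. is
equivariant with respect to some automorphism of `G`) and every bounded `K ⊆ M̃`, the diameter
of `f̃ⁿ(K)` grows at most polynomially in `n`. -/
theorem polynomial_growth_of_lift_iterates
    {X : Type*} [MetricSpace X] [ProperSpace X] [MulAction G X]
    (hgeo : ∀ x y : X, ∃ γ : ℝ → X, γ 0 = x ∧ γ (dist x y) = y ∧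
      ∀ s t : ℝ, dist (γ s) (γ t) = |s - t|)
    (hiso : ∀ g : G, Isometry (fun x : X => g • x))
    (hfree : ∀ (g : G) (x : X), g • x = x → g = 1)
    (_hpd : ProperlyDiscontinuousSMul G X)
    (K₀ : Set X) (hK₀ : IsCompact K₀)
    (hcocompact : ∀ x : X, ∃ (g : G) (k : X), k ∈ K₀ ∧ x = g • k)
    (S : Finset G) (hS : Subgroup.closure (S : Set G) = ⊤)
    (hpoly : ∀ (φ : G ≃* G) (N : ℕ), 1 ≤ N → ∀ A : ℕ → Set G, (A 0).Finite →
      (∀ k, A (k + 1) = wordNbhd S N (φ '' A k)) →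
      ∃ C p : ℕ, ∀ k, ∀ x ∈ A k, ∀ y ∈ A k, wordDist S x y ≤ C * (k + 1) ^ p)
    (f : X ≃ₜ X) (φf : G ≃* G) (hequiv : ∀ (g : G) (x : X), f (g • x) = φf g • f x)
    (K : Set X) (hK : Bornology.IsBounded K) :
    ∃ (C : ℝ) (p : ℕ), 0 < C ∧ ∀ n : ℕ, Metric.diam ((⇑f)^[n] '' K) ≤ C * (n + 1) ^ p := by
  rcases isEmpty_or_nonempty X with hX | hX
  · refine ⟨1, 0, one_pos, fun n => ?_⟩
    have : K = ∅ := Set.eq_empty_of_isEmpty K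
    simp [this]
  -- pick a basepoint in K₀
  obtain ⟨x⟩ := hX
  obtain ⟨g₀, x₀, hx₀, -⟩ := hcocompact x
  -- a bound L for the displacement of the basepoint by generators
  set L : ℝ := 1 + ∑ s ∈ S, dist x₀ (s • x₀) with hLdef
  have hL1 : (1 : ℝ) ≤ L := by
    have : (0 : ℝ) ≤ ∑ s ∈ S, dist x₀ (s • x₀) :=
      Finset.sum_nonneg fun s _ => dist_nonneg
    simp only [hLdef]; linarith
  have hL0 : (0 : ℝ) ≤ L := le_trans zero_le_one hL1
  have hLs : ∀ a : G, (a ∈ S ∨ a⁻¹ ∈ S) → dist x₀ (a • x₀) ≤ L := by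
    intro a ha
    have key : ∀ s ∈ S, dist x₀ (s • x₀) ≤ L := by
      intro s hs
      have := Finset.single_le_sum (f := fun s => dist x₀ (s • x₀))
        (fun i _ => dist_nonneg) hs
      simp only [hLdef]; linarith
    rcases ha with h | h
    · exact key a h
    · have : dist x₀ (a • x₀) = dist x₀ (a⁻¹ • x₀) := by
        have h1 := (hiso a⁻¹).dist_eq x₀ (a • x₀)
        simp only [inv_smul_smul] at h1
        rw [← h1, dist_comm]
      rw [this]; exact key _ h
  -- words move the basepoint by at most L times the length
  have hword : ∀ l : List G, (∀ a ∈ l, a ∈ S ∨ a⁻¹ ∈ S) →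
      dist x₀ (l.prod • x₀) ≤ L * l.length := by
    intro l
    induction l with
    | nil => intro _; simp
    | cons a t ih =>
      intro hl
      have h1 : dist x₀ ((a :: t).prod • x₀) ≤
          dist x₀ (a • x₀) + dist (a • x₀) (a • (t.prod • x₀)) := by
        have : (a :: t).prod • x₀ = a • (t.prod • x₀) := by
          simp [List.prod_cons, mul_smul]
        rw [this]; exact dist_triangle _ _ _
      have h2 : dist (a • x₀) (a • (t.prod • x₀)) = dist x₀ (t.prod • x₀) :=
        (hiso a).dist_eq x₀ (t.prod • x₀)
      have h3 := ih (fun b hb => hl b (List.mem_cons_of_mem a hb))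
      have h4 := hLs a (hl a List.mem_cons_self)
      push_cast [List.length_cons]
      calc dist x₀ ((a :: t).prod • x₀)
          ≤ dist x₀ (a • x₀) + dist x₀ (t.prod • x₀) := by rw [← h2]; exact h1
        _ ≤ L + L * t.length := add_le_add h4 h3
        _ ≤ L * ((t.length : ℝ) + 1) := le_of_eq (by ring)
  -- comparison: distance of orbit points bounded by word distance
  have hcmp : ∀ g h : G, dist (g • x₀) (h • x₀) ≤ L * wordDist S g h := by
    intro g h
    obtain ⟨l, hl, hlen, hprod⟩ := exists_min_word S hS (g⁻¹ * h)
    have h1 : dist (g • x₀) (h • x₀) = dist x₀ ((g⁻¹ * h) • x₀) := by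
      have := (hiso g).dist_eq x₀ ((g⁻¹ * h) • x₀)
      rw [← this]
      congr 1
      rw [← mul_smul, mul_inv_cancel_left]
    rw [h1, ← hprod]
    have := hword l hl
    rw [hprod] at this ⊢
    calc dist x₀ ((g⁻¹ * h) • x₀) ≤ L * l.length := by rw [← hprod]; exact hword l hl
      _ = L * wordDist S g h := by rw [hlen]; rfl
  -- closure of K is compact
  have hKc : IsCompact (closure K) := hK.isCompact_closure
  -- the finite set B covering f '' K₀
  have hfK₀ : IsCompact (f '' K₀) := hK₀.image f.continuous
  set B : Set G := {g : G | ∃ k ∈ K₀, g • k ∈ f '' K₀} with hBdef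
  have hBfin : B.Finite := by
    have h := _hpd.finite_disjoint_inter_image (K := K₀) (L := f '' K₀) hK₀ hfK₀
    refine h.subset ?_
    rintro g ⟨k, hk, hgk⟩
    simp only [Set.mem_setOf_eq, ← Set.nonempty_iff_ne_empty]
    exact ⟨g • k, Set.mem_inter (Set.mem_image_of_mem _ hk) hgk⟩
  -- N bounds the word length of elements of B
  set N : ℕ := 1 + hBfin.toFinset.sup (wordLength S) with hNdef
  have hN1 : 1 ≤ N := Nat.le_add_right 1 _
  have hNB : ∀ b ∈ B, wordLength S b ≤ N := by
    intro b hb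
    have : wordLength S b ≤ hBfin.toFinset.sup (wordLength S) :=
      Finset.le_sup (hBfin.mem_toFinset.2 hb)
    omega
  -- the recursive sequence of sets
  set A : ℕ → Set G := fun n =>
    Nat.rec {g : G | ∃ k ∈ K₀, g • k ∈ closure K}
      (fun _ Ak => wordNbhd S N (φf '' Ak)) n with hAdef
  have hA0 : (A 0).Finite := by
    have h := _hpd.finite_disjoint_inter_image (K := K₀) (L := closure K) hK₀ hKc
    refine h.subset ?_
    rintro g ⟨k, hk, hgk⟩
    simp only [Set.mem_setOf_eq, ← Set.nonempty_iff_ne_empty]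
    exact ⟨g • k, Set.mem_inter (Set.mem_image_of_mem _ hk) hgk⟩
  have hArec : ∀ k, A (k + 1) = wordNbhd S N (φf '' A k) := fun k => rfl
  -- the covering claim
  have hcover : ∀ n, ∀ y ∈ (⇑f)^[n] '' K, ∃ a ∈ A n, ∃ k ∈ K₀, y = a • k := by
    intro n
    induction n with
    | zero =>
      intro y hy
      simp only [Function.iterate_zero, Set.image_id] at hy
      obtain ⟨g, k, hk, hgk⟩ := hcocompact y
      refine ⟨g, ⟨k, hk, ?_⟩, k, hk, hgk⟩
      rw [← hgk]; exact subset_closure hy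
    | succ n ih =>
      rintro y ⟨z, hz, rfl⟩
      rw [Function.iterate_succ_apply']
      obtain ⟨a, ha, k, hk, hak⟩ := ih ((⇑f)^[n] z) (Set.mem_image_of_mem _ hz)
      obtain ⟨b, k', hk', hbk'⟩ := hcocompact (f k)
      have hbB : b ∈ B := ⟨k', hk', by rw [← hbk']; exact Set.mem_image_of_mem _ hk⟩
      refine ⟨φf a * b, ?_, k', hk', ?_⟩
      · refine ⟨φf a, Set.mem_image_of_mem _ ha, ?_⟩
        have : wordDist S (φf a) (φf a * b) = wordLength S b := by
          simp [wordDist, inv_mul_cancel_left]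
        rw [this]
        exact hNB b hbB
      · rw [hak, hequiv, hbk', mul_smul]
  -- apply the polynomial-growth hypothesis
  obtain ⟨C, p, hCp⟩ := hpoly φf N hN1 A hA0 hArec
  -- diameter of K₀
  have hdK₀ : ∀ k ∈ K₀, ∀ k' ∈ K₀, dist k k' ≤ Metric.diam K₀ := fun k hk k' hk' =>
    Metric.dist_le_diam_of_mem hK₀.isBounded hk hk'
  have hdK₀0 : (0 : ℝ) ≤ Metric.diam K₀ := Metric.diam_nonneg
  refine ⟨2 * Metric.diam K₀ + L * C + 1, p, by positivity, fun n => ?_⟩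
  have hpow1 : (1 : ℝ) ≤ ((n : ℝ) + 1) ^ p := one_le_pow₀ (by linarith [Nat.cast_nonneg (α := ℝ) n])
  have hpow0 : (0 : ℝ) ≤ ((n : ℝ) + 1) ^ p := le_trans zero_le_one hpow1
  apply Metric.diam_le_of_forall_dist_le (by positivity)
  intro u hu v hv
  obtain ⟨a, ha, k, hk, rfl⟩ := hcover n u hu
  obtain ⟨a', ha', k', hk', rfl⟩ := hcover n v hv
  have h1 : dist (a • k) (a' • k') ≤
      dist (a • k) (a • x₀) + dist (a • x₀) (a' • x₀) + dist (a' • x₀) (a' • k') :=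
    dist_triangle4 _ _ _ _
  have h2 : dist (a • k) (a • x₀) = dist k x₀ := (hiso a).dist_eq k x₀
  have h3 : dist (a' • x₀) (a' • k') = dist x₀ k' := (hiso a').dist_eq x₀ k'
  have h4 : dist (a • x₀) (a' • x₀) ≤ L * (C * ((n : ℝ) + 1) ^ p) := by
    have hw := hCp n a ha a' ha'
    have hw' : (wordDist S a a' : ℝ) ≤ (C : ℝ) * ((n : ℝ) + 1) ^ p := by
      have := (Nat.cast_le (α := ℝ)).2 hw
      push_cast at this
      convert this using 2
    calc dist (a • x₀) (a' • x₀) ≤ L * wordDist S a a' := hcmp a a'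
      _ ≤ L * ((C : ℝ) * ((n : ℝ) + 1) ^ p) := by
          apply mul_le_mul_of_nonneg_left hw' hL0
  have h5 : dist k x₀ ≤ Metric.diam K₀ := hdK₀ k hk x₀ hx₀
  have h6 : dist x₀ k' ≤ Metric.diam K₀ := hdK₀ x₀ hx₀ k' hk'
  have : dist (a • k) (a' • k') ≤ 2 * Metric.diam K₀ + L * C * ((n : ℝ) + 1) ^ p := by
    rw [h2, h3] at h1
    nlinarith
  calc dist (a • k) (a' • k') ≤ 2 * Metric.diam K₀ + L * C * ((n : ℝ) + 1) ^ p := this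
    _ ≤ (2 * Metric.diam K₀ + L * C + 1) * ((n : ℝ) + 1) ^ p := by nlinarith [mul_nonneg hL0 (Nat.cast_nonneg (α := ℝ) C)]
end

section
/- Let M be a compact metric space, M̃ its universal cover with lifted metric, and f : M → M a homeomorphism with lift f̃ : M̃ → M̃. Suppose there exists an isometry g : M → M with lift g̃ : M̃ → M̃ inducing the same automorphism of π₁(M) as f̃ (i.e., f̃ and g̃ are equivariant with respect to the same automorphism of the deck group). Then there is C > 0 such that d(f̃ⁿ(x), f̃ⁿ(y)) ≤ d(x,y) + 2Cn for all x, y ∈ M̃ and all n ≥ 1. In particular, orbit separation under f̃ grows at most linearly. -/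
/-- let `M̃` be the universal cover of a compact metric space `M` (encoded by a
cocompact isometric action of the deck group `G` on `M̃`), `f̃` a lift of a homeomorphism
`f : M → M`, and `g̃` a lift of an isometry `g : M → M` inducing the same automorphism `φ`
of `π₁(M)`. Then there is `C > 0` with `d(f̃ⁿ x, f̃ⁿ y) ≤ d(x, y) + 2Cn` for all `x, y` and
`n ≥ 1`: orbit separation grows at most linearly. -/
theorem linear_orbit_growth_of_isometric_model
    {X : Type*} [MetricSpace X] {G : Type*} [Group G] [MulAction G X]
    (hiso : ∀ g : G, Isometry (fun x : X => g • x))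
    (K : Set X) (hK : IsCompact K) (hKcov : ∀ x : X, ∃ (γ : G) (k : X), k ∈ K ∧ x = γ • k)
    (ftil : X ≃ₜ X) (gtil : X → X) (hgiso : Isometry gtil) (hgsurj : Function.Surjective gtil)
    (φ : G ≃* G)
    (hfequiv : ∀ (γ : G) (x : X), ftil (γ • x) = φ γ • ftil x)
    (hgequiv : ∀ (γ : G) (x : X), gtil (γ • x) = φ γ • gtil x) :
    ∃ C > 0, ∀ n : ℕ, 1 ≤ n → ∀ x y : X,
      dist ((⇑ftil)^[n] x) ((⇑ftil)^[n] y) ≤ dist x y + 2 * C * n := by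
  classical
  set h : X → ℝ := fun x => dist (ftil x) (gtil x) with hh
  have hcont : ContinuousOn h K :=
    (Continuous.dist ftil.continuous hgiso.continuous).continuousOn
  obtain ⟨C₀, hC₀⟩ := (hK.image_of_continuousOn hcont).bddAbove
  set C : ℝ := max C₀ 1 with hC
  have hCpos : 0 < C := lt_of_lt_of_le one_pos (le_max_right _ _)
  have hbound : ∀ x : X, dist (ftil x) (gtil x) ≤ C := by
    intro x
    obtain ⟨γ, k, hk, rfl⟩ := hKcov x
    rw [hfequiv, hgequiv, (hiso (φ γ)).dist_eq]
    exact le_trans (hC₀ ⟨k, hk, rfl⟩) (le_max_left _ _)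
  refine ⟨C, hCpos, fun n _ x y => ?_⟩
  clear hK hKcov
  induction n with
  | zero => simp
  | succ n ih =>
    by_cases hn : 1 ≤ n
    · have ih' := ih hn
      have step : dist ((⇑ftil)^[n+1] x) ((⇑ftil)^[n+1] y)
          ≤ dist ((⇑ftil)^[n] x) ((⇑ftil)^[n] y) + 2 * C := by
        rw [Function.iterate_succ_apply', Function.iterate_succ_apply']
        set a := (⇑ftil)^[n] x
        set b := (⇑ftil)^[n] y
        calc dist (ftil a) (ftil b)
            ≤ dist (ftil a) (gtil a) + dist (gtil a) (gtil b) + dist (gtil b) (ftil b) :=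
              dist_triangle4 _ _ _ _
          _ ≤ C + dist a b + C := by
              gcongr
              · exact hbound a
              · exact (hgiso.dist_eq a b).le
              · rw [dist_comm]; exact hbound b
          _ = dist a b + 2 * C := by ring
      calc dist ((⇑ftil)^[n+1] x) ((⇑ftil)^[n+1] y)
          ≤ dist ((⇑ftil)^[n] x) ((⇑ftil)^[n] y) + 2 * C := step
        _ ≤ (dist x y + 2 * C * n) + 2 * C := by linarith
        _ = dist x y + 2 * C * ((n : ℝ) + 1) := by ring
        _ = dist x y + 2 * C * ((n + 1 : ℕ) : ℝ) := by push_cast; ring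
    · interval_cases n
      simp only [zero_add, Function.iterate_one, Nat.cast_one, mul_one]
      calc dist (ftil x) (ftil y)
          ≤ dist (ftil x) (gtil x) + dist (gtil x) (gtil y) + dist (gtil y) (ftil y) :=
            dist_triangle4 _ _ _ _
        _ ≤ C + dist x y + C := by
            gcongr
            · exact hbound x
            · exact (hgiso.dist_eq x y).le
            · rw [dist_comm]; exact hbound y
        _ ≤ dist x y + 2 * C := by linarith
end
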